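/- Let A be a weighted directed graph on n vertices that is weakly connected and balanced, with total edge weight W = ∑ i, ∑ j, A i j > 0. Then the forward and backward democracy coefficients both equal 1: η_f(A) = 1 and η_b(A) = 1. -/

import Mathlib

open Matrix BigOperators

noncomputable section

variable {n : ℕ}

/-- Weighted in-degree vector. -/
def indeg (A : Matrix (Fin n) (Fin n) ℝ) (j : Fin n) : ℝ := ∑ i, A i j

/-- Weighted out-degree vector. -/
def outdeg (A : Matrix (Fin n) (Fin n) ℝ) (i : Fin n) : ℝ := ∑ j, A i j

/-- Weighted in-degree Laplacian `L = diag d - A`. -/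
def inLap (A : Matrix (Fin n) (Fin n) ℝ) : Matrix (Fin n) (Fin n) ℝ :=
  Matrix.diagonal (indeg A) - A

/-- Reachability: reflexive-transitive closure of the edge relation. -/
def Reaches (A : Matrix (Fin n) (Fin n) ℝ) : Fin n → Fin n → Prop :=
  Relation.ReflTransGen fun i j => 0 < A i j

/-- Weak connectivity. -/
def WeaklyConnected (A : Matrix (Fin n) (Fin n) ℝ) : Prop :=
  ∀ i j : Fin n, Relation.ReflTransGen (fun i j => 0 < A i j ∨ 0 < A j i) i j

/-- Strong connectivity. -/
def StronglyConnected (A : Matrix (Fin n) (Fin n) ℝ) : Prop :=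
  ∀ i j : Fin n, Reaches A i j

/-- Simply forward influenced graph. -/
def SimplyForwardInfluenced (A : Matrix (Fin n) (Fin n) ℝ) : Prop :=
  (∃ i, indeg A i = 0) ∧ (∃ i, indeg A i ≠ 0) ∧
    ∀ j, indeg A j ≠ 0 → ∃ i, indeg A i = 0 ∧ Reaches A i j

/-- A set of vertices with no incoming edges from outside. -/
def InClosed (A : Matrix (Fin n) (Fin n) ℝ) (S : Finset (Fin n)) : Prop :=
  ∀ i j : Fin n, i ∉ S → j ∈ S → A i j = 0

/-- Minimal source subgraph. -/
def MinSourceSubgraph (A : Matrix (Fin n) (Fin n) ℝ) (S : Finset (Fin n)) : Prop :=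
  S.Nonempty ∧ InClosed A S ∧ ∀ T ⊆ S, T.Nonempty → T ≠ S → ¬ InClosed A T

/-- Total edge weight. -/
def totalWeight (A : Matrix (Fin n) (Fin n) ℝ) : ℝ := ∑ i, ∑ j, A i j

/-- `g` is a forward hierarchical level vector: a minimizer of `‖Lᵀ x - d‖₂`. -/
def IsFHL (A : Matrix (Fin n) (Fin n) ℝ) (g : Fin n → ℝ) : Prop :=
  ∀ x : Fin n → ℝ,
    ∑ i, ((inLap A)ᵀ.mulVec g i - indeg A i) ^ 2 ≤
      ∑ i, ((inLap A)ᵀ.mulVec x i - indeg A i) ^ 2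

/-- Forward democracy coefficient, computed from a forward hierarchical level vector `g`. -/
def etaF (A : Matrix (Fin n) (Fin n) ℝ) (g : Fin n → ℝ) : ℝ :=
  1 - (∑ i, ∑ j, A i j * (g j - g i)) / totalWeight A

/-- Forward influence centrality of a vertex, from a forward hierarchical level vector `g`. -/
def vF (A : Matrix (Fin n) (Fin n) ℝ) (g : Fin n → ℝ) (i : Fin n) : ℝ :=
  if indeg A i = 0 then 1 else 1 - (∑ k, A k i * (g i - g k)) / indeg A i

/-- `b` is the orthogonal projection of `d` onto `ker L` (standard Euclidean inner product). -/
def IsProjKerL (A : Matrix (Fin n) (Fin n) ℝ) (b : Fin n → ℝ) : Prop :=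
  (inLap A).mulVec b = 0 ∧
    ∀ x : Fin n → ℝ, (inLap A).mulVec x = 0 → ∑ i, (indeg A i - b i) * x i = 0

lemma etaF_eq_one_of_balanced (A : Matrix (Fin n) (Fin n) ℝ)
    (hbal : ∀ i, indeg A i = outdeg A i) (hW : 0 < totalWeight A)
    (g : Fin n → ℝ) : etaF A g = 1 := by
  have h1 : ∑ i, ∑ j, A i j * (g j - g i)
      = (∑ j, indeg A j * g j) - (∑ i, outdeg A i * g i) := by
    simp_rw [mul_sub, Finset.sum_sub_distrib, indeg, outdeg, Finset.sum_mul]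
    rw [Finset.sum_comm]
  have h2 : ∑ i, ∑ j, A i j * (g j - g i) = 0 := by
    rw [h1]
    simp [hbal]
  unfold etaF
  rw [h2]
  simp

theorem stmt_14 (hn : 0 < n) (A : Matrix (Fin n) (Fin n) ℝ)
    (hA : ∀ i j, 0 ≤ A i j) (hdiag : ∀ i, A i i = 0)
    (hwc : WeaklyConnected A) (hbal : ∀ i, indeg A i = outdeg A i)
    (hW : 0 < totalWeight A)
    (g γ : Fin n → ℝ) (hg : IsFHL A g) (hγ : IsFHL Aᵀ γ) :
    etaF A g = 1 ∧ etaF Aᵀ γ = 1 := by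
  have hbalT : ∀ i, indeg Aᵀ i = outdeg Aᵀ i := by
    intro i
    simp only [indeg, outdeg, Matrix.transpose_apply]
    rw [← outdeg, ← indeg, hbal]
  have hWT : 0 < totalWeight Aᵀ := by
    have : totalWeight Aᵀ = totalWeight A := by
      unfold totalWeight
      exact Finset.sum_comm
    rwa [this]
  exact ⟨etaF_eq_one_of_balanced A hbal hW g,
    etaF_eq_one_of_balanced Aᵀ hbalT hWT γ⟩
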